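/- For k = 1 and b_0 = 0 or 1, the character of (1,2)-admissible configurations (sequences of 0s and 1s with no two consecutive 1s, with a_0 ≤ b_0) satisfies: Σ over such sequences of q^{Σ j a_j} z^{Σ a_j} = Σ_{m ≥ 0} q^{m(m−1)+ (1−b_0)m} z^m / (q)_m. -/

import Mathlib

open PowerSeries Finset

namespace RRaux



/-- Geometric series with 1's at multiples of `k`. -/
noncomputable def G (k : ℕ) : PowerSeries ℂ :=
  PowerSeries.mk fun d => if k ∣ d then 1 else 0

lemma one_sub_X_pow_mul_G (k : ℕ) (hk : 0 < k) :
    ((1 : PowerSeries ℂ) - X ^ k) * G k = 1 := by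
  ext d
  rw [sub_mul, one_mul, map_sub, PowerSeries.coeff_X_pow_mul', PowerSeries.coeff_one]
  simp only [G, coeff_mk]
  rcases Nat.eq_zero_or_pos d with rfl | hd
  · simp [Nat.le_zero, hk.ne']
  · by_cases hkd : k ≤ d
    · by_cases h : k ∣ d
      · have : k ∣ d - k := Nat.dvd_sub h dvd_rfl
        simp [h, hkd, this, hd.ne']
      · have h2 : ¬ k ∣ d - k := fun hc =>
          h (by have := Nat.dvd_add hc (dvd_refl k); rwa [Nat.sub_add_cancel hkd] at this)
        simp [h, h2, hkd, hd.ne']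
    · have h : ¬ k ∣ d := fun hc => hkd (Nat.le_of_dvd hd hc)
      simp [h, hkd, hd.ne']

lemma prod_inv_eq (n : ℕ) :
    (∏ j ∈ Finset.range n, (1 - (PowerSeries.X : PowerSeries ℂ) ^ (j + 1)))⁻¹ =
      ∏ j ∈ Finset.range n, G (j + 1) := by
  rw [PowerSeries.inv_eq_iff_mul_eq_one]
  · rw [← Finset.prod_mul_distrib]
    rw [Finset.prod_congr rfl fun j _ => mul_comm (G (j+1)) _ ▸
      one_sub_X_pow_mul_G (j+1) (Nat.succ_pos j)]
    exact Finset.prod_const_one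
  · rw [map_prod]
    rw [Finset.prod_congr rfl fun j _ => by
      rw [map_sub, map_one, map_pow, constantCoeff_X, zero_pow (Nat.succ_ne_zero j), sub_zero]]
    simp



/-- the Finset of admissible `l`'s -/
noncomputable def DF (n m : ℕ) : Finset (ℕ →₀ ℕ) :=
  (Finset.finsuppAntidiag (range n) m).filter fun l => ∀ j ∈ range n, (j + 1) ∣ l j

lemma coeff_prod_G (n m : ℕ) :
    (PowerSeries.coeff m) (∏ j ∈ range n, G (j + 1)) = (DF n m).card := by
  rw [PowerSeries.coeff_prod]
  have : ∀ l ∈ (range n).finsuppAntidiag m,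
      (∏ j ∈ range n, (PowerSeries.coeff (l j)) (G (j+1))) =
      if ∀ j ∈ range n, (j + 1) ∣ l j then (1:ℂ) else 0 := by
    intro l _
    simp only [G, coeff_mk]
    exact Finset.prod_boole
  rw [Finset.sum_congr rfl this, Finset.sum_boole]
  rfl


def wt (n : ℕ) (c : Fin n → ℕ) : ℕ := ∑ j : Fin n, ((j : ℕ) + 1) * c j

def T (n : ℕ) (c : Fin n → ℕ) (k : ℕ) : ℕ :=
  ∑ j : Fin n, if k ≤ (j : ℕ) then c j else 0

lemma T_antitone (n : ℕ) (c : Fin n → ℕ) : Antitone (T n c) := by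
  intro k k' h
  refine Finset.sum_le_sum fun j _ => ?_
  by_cases hj : k' ≤ (j : ℕ)
  · simp [hj, le_trans h hj]
  · simp [hj]

lemma T_of_le (n : ℕ) (c : Fin n → ℕ) {k : ℕ} (h : n ≤ k) : T n c k = 0 := by
  refine Finset.sum_eq_zero fun j _ => ?_
  have : ¬ k ≤ (j : ℕ) := by have := j.isLt; omega
  simp [this]

lemma T_step (n : ℕ) (c : Fin n → ℕ) {k : ℕ} (h : k < n) :
    T n c k = c ⟨k, h⟩ + T n c (k + 1) := by
  unfold T
  have : ∀ j : Fin n, (if k ≤ (j:ℕ) then c j else 0) =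
      (if j = ⟨k, h⟩ then c j else 0) + (if k + 1 ≤ (j:ℕ) then c j else 0) := by
    intro j
    rcases eq_or_ne j ⟨k, h⟩ with rfl | hne
    · simp
    · have : (j:ℕ) ≠ k := fun hc => hne (Fin.ext hc)
      by_cases h2 : k + 1 ≤ (j:ℕ)
      · simp [h2, hne, (by omega : k ≤ (j:ℕ))]
      · simp [h2, hne]
        omega
  rw [Finset.sum_congr rfl fun j _ => this j, Finset.sum_add_distrib,
    Finset.sum_ite_eq' Finset.univ (⟨k, h⟩ : Fin n) c,
    if_pos (Finset.mem_univ _)]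

lemma sum_T (n : ℕ) (c : Fin n → ℕ) :
    ∑ t : Fin n, T n c (n - 1 - (t : ℕ)) = wt n c := by
  unfold T wt
  rw [Finset.sum_comm]
  refine Finset.sum_congr rfl fun j _ => ?_
  rw [Fin.sum_univ_eq_sum_range (fun t => if n - 1 - t ≤ (j : ℕ) then c j else 0) n]
  rw [← Finset.sum_filter]
  have hfe : (range n).filter (fun t => n - 1 - t ≤ (j : ℕ)) = Finset.Ico (n - 1 - (j:ℕ)) n := by
    ext t
    simp only [mem_filter, mem_range, mem_Ico]
    omega
  rw [hfe, Finset.sum_const, Nat.card_Ico, smul_eq_mul]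
  have := j.isLt
  congr 1
  omega



def Sf (n : ℕ) (c : Fin n → ℕ) (t : Fin n) : ℕ := T n c (n - 1 - (t : ℕ))

lemma Sf_monotone (n : ℕ) (c : Fin n → ℕ) : Monotone (Sf n c) := by
  intro t t' h
  exact T_antitone n c (by have := Fin.le_iff_val_le_val.1 h; omega)

lemma sum_Sf (n : ℕ) (c : Fin n → ℕ) : ∑ t : Fin n, Sf n c t = wt n c := sum_T n c

lemma T_eq_of_Sf_eq {n : ℕ} {c c' : Fin n → ℕ} (h : Sf n c = Sf n c') (k : ℕ) :
    T n c k = T n c' k := by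
  rcases lt_or_ge k n with hk | hk
  · have := congrFun h ⟨n - 1 - k, by omega⟩
    unfold Sf at this
    simpa [(by omega : n - 1 - (n - 1 - k) = k)] using this
  · rw [T_of_le n c hk, T_of_le n c' hk]

lemma Sf_injective {n : ℕ} {c c' : Fin n → ℕ} (h : Sf n c = Sf n c') : c = c' := by
  funext j
  have h1 := T_step n c j.isLt
  have h2 := T_step n c' j.isLt
  have e1 := T_eq_of_Sf_eq h (j : ℕ)
  have e2 := T_eq_of_Sf_eq h ((j : ℕ) + 1)
  have : (⟨(j : ℕ), j.isLt⟩ : Fin n) = j := Fin.ext rfl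
  rw [this] at h1 h2
  omega

def dstep (n : ℕ) (f : Fin n → ℕ) (j : Fin n) : ℕ :=
  f ⟨n - 1 - (j : ℕ), by have := j.isLt; omega⟩ -
    (if h : (j : ℕ) + 1 < n then f ⟨n - 1 - ((j : ℕ) + 1), by omega⟩ else 0)

lemma Sf_dstep {n : ℕ} {f : Fin n → ℕ} (hf : Monotone f) : Sf n (dstep n f) = f := by
  have key : ∀ jv (hjv : jv < n), T n (dstep n f) (n - 1 - jv) = f ⟨jv, hjv⟩ := by
    intro jv
    induction jv with
    | zero =>
      intro hjv
      rw [T_step n _ (by omega : n - 1 - 0 < n), T_of_le n _ (by omega)]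
      unfold dstep
      have hnot : ¬ ((⟨n - 1 - 0, by omega⟩ : Fin n) : ℕ) + 1 < n := by simp; omega
      rw [dif_neg hnot]
      have : (⟨n - 1 - (((⟨n - 1 - 0, by omega⟩ : Fin n)) : ℕ), by omega⟩ : Fin n)
          = ⟨0, hjv⟩ := Fin.ext (by simp)
      rw [this]
      omega
    | succ jv ih =>
      intro hjv
      have hjv' : jv < n := by omega
      have ihv := ih hjv'
      set k := n - 1 - (jv + 1) with hk
      have hkn : k < n := by omega
      rw [T_step n _ hkn]
      have hk1 : k + 1 = n - 1 - jv := by omega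
      rw [hk1, ihv]
      unfold dstep
      have hcond : ((⟨k, hkn⟩ : Fin n) : ℕ) + 1 < n := by simp [hk]; omega
      rw [dif_pos hcond]
      have e1 : (⟨n - 1 - (((⟨k, hkn⟩ : Fin n)) : ℕ), by omega⟩ : Fin n)
          = ⟨jv + 1, hjv⟩ := Fin.ext (by simp [hk]; omega)
      have e2 : (⟨n - 1 - ((((⟨k, hkn⟩ : Fin n)) : ℕ) + 1), by omega⟩ : Fin n)
          = ⟨jv, hjv'⟩ := Fin.ext (by simp [hk]; omega)
      rw [e1, e2]
      have hle : f ⟨jv, hjv'⟩ ≤ f ⟨jv + 1, hjv⟩ := hf (by simp [Fin.le_iff_val_le_val])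
      omega
  funext t
  unfold Sf
  have := key (t : ℕ) t.isLt
  rw [this]




noncomputable def Theta (n : ℕ) (c : Fin n → ℕ) : ℕ →₀ ℕ :=
  ∑ t : Fin n, Finsupp.single (t : ℕ) (((t : ℕ) + 1) * c t)

lemma Theta_apply (n : ℕ) (c : Fin n → ℕ) (j : ℕ) :
    Theta n c j = if h : j < n then (j + 1) * c ⟨j, h⟩ else 0 := by
  unfold Theta
  rw [Finsupp.finset_sum_apply]
  by_cases h : j < n
  · rw [dif_pos h]
    have : ∀ t : Fin n, (Finsupp.single (t:ℕ) (((t:ℕ)+1) * c t)) j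
        = if t = ⟨j, h⟩ then ((t:ℕ)+1) * c t else 0 := by
      intro t
      rw [Finsupp.single_apply]
      congr 1
      simp [Fin.ext_iff]
    rw [Finset.sum_congr rfl fun t _ => this t, Finset.sum_ite_eq' Finset.univ,
      if_pos (Finset.mem_univ _)]
  · rw [dif_neg h]
    refine Finset.sum_eq_zero fun t _ => ?_
    rw [Finsupp.single_apply, if_neg (by have := t.isLt; omega)]

lemma sum_Theta (n m : ℕ) (c : Fin n → ℕ) :
    ∑ j ∈ range n, Theta n c j = wt n c := by
  have h1 : ∀ j ∈ range n, Theta n c j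
      = (fun j => if h : j < n then (j + 1) * c ⟨j, h⟩ else 0) j :=
    fun j _ => Theta_apply n c j
  rw [Finset.sum_congr rfl h1,
    ← Fin.sum_univ_eq_sum_range (fun j => if h : j < n then (j + 1) * c ⟨j, h⟩ else 0) n]
  exact Finset.sum_congr rfl fun t _ => by rw [dif_pos t.isLt]

lemma Theta_mem (n m : ℕ) (c : Fin n → ℕ) (h : wt n c = m) : Theta n c ∈ DF n m := by
  rw [DF, Finset.mem_filter, Finset.mem_finsuppAntidiag]
  refine ⟨⟨by rw [← h]; exact sum_Theta n m c, fun j hj => ?_⟩, fun j hj => ?_⟩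
  · rw [Finset.mem_range]
    by_contra hc
    have := Finsupp.mem_support_iff.1 hj
    rw [Theta_apply, dif_neg hc] at this
    exact this rfl
  · rw [Theta_apply, dif_pos (Finset.mem_range.1 hj)]
    exact Dvd.intro _ rfl

lemma Theta_inj (n : ℕ) : Function.Injective (Theta n) := by
  intro c c' h
  funext t
  have := congrFun (congrArg (fun l : ℕ →₀ ℕ => (l : ℕ → ℕ)) h) (t : ℕ)
  simp only [Theta_apply, dif_pos t.isLt] at this
  have ht : (⟨(t:ℕ), t.isLt⟩ : Fin n) = t := Fin.ext rfl
  rw [ht] at this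
  exact Nat.eq_of_mul_eq_mul_left (by omega) this

lemma DF_eq_image (n m : ℕ) : (DF n m : Set (ℕ →₀ ℕ)) = Theta n '' {c | wt n c = m} := by
  ext l
  constructor
  · intro hl
    rw [Finset.mem_coe, DF, Finset.mem_filter, Finset.mem_finsuppAntidiag] at hl
    obtain ⟨⟨hsum, hsupp⟩, hdvd⟩ := hl
    refine ⟨fun t => l (t : ℕ) / ((t : ℕ) + 1), ?_, ?_⟩
    · show wt n _ = m
      rw [← sum_Theta n m, ← hsum]
      refine Finset.sum_congr rfl fun j hj => ?_
      rw [Theta_apply, dif_pos (Finset.mem_range.1 hj)]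
      exact Nat.mul_div_cancel' (hdvd j hj)
    · ext j
      rw [Theta_apply]
      by_cases h : j < n
      · rw [dif_pos h]
        exact Nat.mul_div_cancel' (hdvd j (Finset.mem_range.2 h))
      · rw [dif_neg h]
        by_contra hc
        exact h (Finset.mem_range.1 (hsupp (Finsupp.mem_support_iff.2 fun hz => hc hz.symm)))
  · rintro ⟨c, hc, rfl⟩
    exact Theta_mem n m c hc

lemma card_DF (n m : ℕ) : ((DF n m).card : ℕ) = Set.ncard {c : Fin n → ℕ | wt n c = m} := by
  rw [← Set.ncard_coe_finset, DF_eq_image,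
    Set.ncard_image_of_injOn ((Theta_inj n).injOn)]


def E (b0 n : ℕ) : ℕ := n * (n - 1) + (1 - b0) * n

def posf (b0 n : ℕ) (f : Fin n → ℕ) (t : Fin n) : ℕ := (1 - b0) + 2 * (t : ℕ) + f t

lemma posf_step {b0 n : ℕ} {f : Fin n → ℕ} (hf : Monotone f) {t t' : Fin n} (h : t < t') :
    posf b0 n f t + 2 ≤ posf b0 n f t' := by
  have h1 : f t ≤ f t' := hf h.le
  have h2 : (t : ℕ) < (t' : ℕ) := h
  unfold posf; omega

lemma posf_strictMono {b0 n : ℕ} {f : Fin n → ℕ} (hf : Monotone f) :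
    StrictMono (posf b0 n f) := fun t t' h => by have := posf_step (b0 := b0) hf h; omega

noncomputable def Psi (b0 n : ℕ) (f : Fin n → ℕ) : ℕ →₀ ℕ :=
  ∑ t : Fin n, Finsupp.single (posf b0 n f t) 1

lemma Psi_apply {b0 n : ℕ} {f : Fin n → ℕ} (hf : Monotone f) (i : ℕ) :
    Psi b0 n f i = if ∃ t, posf b0 n f t = i then 1 else 0 := by
  unfold Psi
  rw [Finset.sum_apply']
  by_cases h : ∃ t, posf b0 n f t = i
  · obtain ⟨t0, ht0⟩ := h
    have : ∀ t : Fin n, (Finsupp.single (posf b0 n f t) 1) i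
        = if t = t0 then 1 else 0 := by
      intro t
      rw [Finsupp.single_apply]
      congr 1
      rw [eq_iff_iff]
      constructor
      · intro hh
        exact (posf_strictMono (b0 := b0) hf).injective (hh.trans ht0.symm)
      · rintro rfl; exact ht0
    rw [Finset.sum_congr rfl fun t _ => this t, Finset.sum_ite_eq' Finset.univ,
      if_pos (Finset.mem_univ _), if_pos ⟨t0, ht0⟩]
  · rw [if_neg h]
    refine Finset.sum_eq_zero fun t _ => ?_
    rw [Finsupp.single_apply, if_neg fun hc => h ⟨t, hc⟩]

lemma Psi_le_one {b0 n : ℕ} {f : Fin n → ℕ} (hf : Monotone f) (i : ℕ) :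
    Psi b0 n f i ≤ 1 := by
  rw [Psi_apply hf]; split <;> omega

lemma Psi_adj {b0 n : ℕ} {f : Fin n → ℕ} (hf : Monotone f) (i : ℕ) :
    Psi b0 n f i * Psi b0 n f (i + 1) = 0 := by
  rw [Psi_apply hf, Psi_apply hf]
  by_cases h1 : ∃ t, posf b0 n f t = i
  · by_cases h2 : ∃ t, posf b0 n f t = i + 1
    · obtain ⟨t, ht⟩ := h1
      obtain ⟨t', ht'⟩ := h2
      have hlt : t < t' := by
        by_contra hc
        rcases (not_lt.1 hc).lt_or_eq with hh | rfl
        · have := posf_strictMono (b0 := b0) hf hh; omega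
        · omega
      have := posf_step (b0 := b0) hf hlt
      omega
    · simp [h2]
  · simp [h1]

lemma Psi_zero_le {b0 n : ℕ} (hb0 : b0 ≤ 1) {f : Fin n → ℕ} (hf : Monotone f) :
    Psi b0 n f 0 ≤ b0 := by
  rcases Nat.eq_zero_or_pos b0 with rfl | hb
  · rw [Psi_apply hf, if_neg]
    rintro ⟨t, ht⟩
    unfold posf at ht
    omega
  · have := Psi_le_one (b0 := b0) hf 0
    omega

lemma Psi_sum_values {b0 n : ℕ} (f : Fin n → ℕ) :
    ((Psi b0 n f).sum fun _ v => v) = n := by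
  unfold Psi
  rw [← Finsupp.sum_finsetSum_index (fun _ => rfl) (fun _ _ _ => rfl)]
  rw [Finset.sum_congr rfl fun t _ => Finsupp.sum_single_index rfl]
  simp

lemma Psi_sum_weight {b0 n : ℕ} (f : Fin n → ℕ) :
    ((Psi b0 n f).sum fun i v => i * v) = E b0 n + ∑ t : Fin n, f t := by
  unfold Psi
  rw [← Finsupp.sum_finsetSum_index (fun _ => by simp) (fun i x y => by ring)]
  rw [Finset.sum_congr rfl fun t _ => Finsupp.sum_single_index (by simp)]
  have h2 : ∑ t : Fin n, (t : ℕ) = ∑ i ∈ range n, i := Fin.sum_univ_eq_sum_range (fun i => i) n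
  have h3 : (∑ i ∈ range n, i) * 2 = n * (n - 1) := Finset.sum_range_id_mul_two n
  simp only [mul_one, posf, E]
  rw [Finset.sum_add_distrib, Finset.sum_add_distrib, Finset.sum_const,
    ← Finset.mul_sum, h2]
  simp only [smul_eq_mul, card_univ, Fintype.card_fin]
  set A := ∑ i ∈ range n, i with hA
  set B := ∑ t : Fin n, f t with hB
  have h5 : n * (1 - b0) = (1 - b0) * n := mul_comm _ _
  omega



lemma strictMono_eq_of_range {n : ℕ} {u v : Fin n → ℕ} (hu : StrictMono u)
    (hv : StrictMono v) (h : ∀ i, (∃ t, u t = i) ↔ (∃ t, v t = i)) : u = v := by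
  set s := Finset.image u Finset.univ with hs
  have hcard : s.card = n := by
    rw [hs, Finset.card_image_of_injective _ hu.injective, card_univ, Fintype.card_fin]
  have h1 : u = s.orderEmbOfFin hcard :=
    Finset.orderEmbOfFin_unique hcard (fun t => Finset.mem_image_of_mem u (mem_univ t)) hu
  have h2 : v = s.orderEmbOfFin hcard := by
    refine Finset.orderEmbOfFin_unique hcard (fun t => ?_) hv
    obtain ⟨t', ht'⟩ := (h (v t)).2 ⟨t, rfl⟩
    exact ht' ▸ Finset.mem_image_of_mem u (mem_univ t')
  rw [h1, h2]

lemma Psi_inj {b0 n : ℕ} {f g : Fin n → ℕ} (hf : Monotone f) (hg : Monotone g)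
    (h : Psi b0 n f = Psi b0 n g) : f = g := by
  have hiff : ∀ i, (∃ t, posf b0 n f t = i) ↔ (∃ t, posf b0 n g t = i) := by
    intro i
    have := congrFun (congrArg (fun l : ℕ →₀ ℕ => (l : ℕ → ℕ)) h) i
    simp only [Psi_apply hf, Psi_apply hg] at this
    by_cases h1 : ∃ t, posf b0 n f t = i <;> by_cases h2 : ∃ t, posf b0 n g t = i <;>
      simp [h1, h2] at this ⊢
  have heq : posf b0 n f = posf b0 n g :=
    strictMono_eq_of_range (posf_strictMono hf) (posf_strictMono hg) hiff
  funext t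
  have := congrFun heq t
  unfold posf at this
  omega

lemma exists_preimage {b0 n d : ℕ} (a : ℕ →₀ ℕ)
    (h1 : ∀ i, a i * a (i + 1) = 0) (h2 : ∀ i, a i ≤ 1) (h3 : a 0 ≤ b0)
    (h4 : (a.sum fun _ v => v) = n) (h5 : (a.sum fun i v => i * v) = d) :
    ∃ f : Fin n → ℕ, Monotone f ∧ Psi b0 n f = a ∧ d = E b0 n + ∑ t, f t := by
  have hval : ∀ i ∈ a.support, a i = 1 := fun i hi =>
    le_antisymm (h2 i) (Nat.one_le_iff_ne_zero.2 (Finsupp.mem_support_iff.1 hi))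
  have hcard : a.support.card = n := by
    rw [← h4]
    show _ = ∑ i ∈ a.support, a i
    rw [Finset.sum_congr rfl hval, Finset.sum_const, smul_eq_mul, mul_one]
  have hmem : ∀ t : Fin n, a.support.orderEmbOfFin hcard t ∈ a.support :=
    fun t => a.support.orderEmbOfFin_mem hcard t
  set e : Fin n → ℕ := fun t => a.support.orderEmbOfFin hcard t with he
  have hstep : ∀ t t' : Fin n, t < t' → e t + 2 ≤ e t' := by
    intro t t' h
    have hlt : e t < e t' := (a.support.orderEmbOfFin hcard).strictMono h
    by_contra hc
    have heq : e t + 1 = e t' := by omega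
    have hprod := h1 (e t)
    have hat : a (e t) = 1 := hval _ (hmem t)
    have hat' : a (e t + 1) = 1 := by rw [heq]; exact hval _ (hmem t')
    rw [hat, hat'] at hprod
    omega
  have hbase : ∀ tv, ∀ h : tv < n, (1 - b0) + 2 * tv ≤ e ⟨tv, h⟩ := by
    intro tv
    induction tv with
    | zero =>
      intro h
      rcases Nat.eq_zero_or_pos b0 with rfl | hb
      · have h0 : (0 : ℕ) ∉ a.support := by
          intro hc
          have := hval 0 hc
          omega
        have : e ⟨0, h⟩ ≠ 0 := fun hc => h0 (hc ▸ hmem _)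
        omega
      · have : 1 - b0 = 0 := by omega
        omega
    | succ tv ih =>
      intro h
      have h' : tv < n := by omega
      have hi := ih h'
      have hs := hstep ⟨tv, h'⟩ ⟨tv + 1, h⟩ (by simp [Fin.lt_iff_val_lt_val])
      omega
  have hstep' : ∀ dv tv (h : tv + dv < n), e ⟨tv, by omega⟩ + 2 * dv ≤ e ⟨tv + dv, h⟩ := by
    intro dv
    induction dv with
    | zero => intro tv h; simp
    | succ dv ih =>
      intro tv h
      have h' : tv + dv < n := by omega
      have hi := ih tv h'
      have hs := hstep ⟨tv + dv, h'⟩ ⟨tv + (dv + 1), h⟩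
        (by simp [Fin.lt_iff_val_lt_val])
      omega
  set f : Fin n → ℕ := fun t => e t - ((1 - b0) + 2 * (t : ℕ)) with hfdef
  have hbase' : ∀ t : Fin n, (1 - b0) + 2 * (t : ℕ) ≤ e t := by
    intro t
    have := hbase (t : ℕ) t.isLt
    simpa using this
  have hposf : ∀ t, posf b0 n f t = e t := by
    intro t
    have := hbase' t
    simp only [posf, hfdef]
    omega
  have hmono : Monotone f := by
    intro t t' htt
    rcases htt.lt_or_eq with hlt | heq2
    · have hvv : (t : ℕ) < (t' : ℕ) := hlt
      have ha1 := hstep' ((t' : ℕ) - (t : ℕ)) (t : ℕ) (by have := t'.isLt; omega)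
      have e1 : (⟨(t : ℕ), by omega⟩ : Fin n) = t := Fin.ext rfl
      have e2 : (⟨(t : ℕ) + ((t' : ℕ) - (t : ℕ)), by omega⟩ : Fin n) = t' :=
        Fin.ext (by simp; omega)
      rw [e1, e2] at ha1
      have ha2 := hbase' t
      have ha3 := hbase' t'
      simp only [hfdef]
      omega
    · rw [heq2]
  have hPsi : Psi b0 n f = a := by
    ext i
    rw [Psi_apply hmono]
    have hrange : (∃ t, posf b0 n f t = i) ↔ i ∈ a.support := by
      constructor
      · rintro ⟨t, ht⟩
        rw [← ht, hposf t]
        exact hmem t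
      · intro hi
        have : i ∈ Set.range (a.support.orderEmbOfFin hcard) := by
          rw [Finset.range_orderEmbOfFin]
          exact hi
        obtain ⟨t, ht⟩ := this
        exact ⟨t, by rw [hposf t, he]; exact ht⟩
    by_cases hi : i ∈ a.support
    · rw [if_pos (hrange.2 hi), hval i hi]
    · rw [if_neg fun hc => hi (hrange.1 hc)]
      exact (Finsupp.notMem_support_iff.1 hi).symm
  refine ⟨f, hmono, hPsi, ?_⟩
  rw [← h5, ← hPsi, Psi_sum_weight]


lemma ncard_L_eq_M (n m : ℕ) :
    Set.ncard {f : Fin n → ℕ | Monotone f ∧ ∑ t : Fin n, f t = m}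
      = Set.ncard {c : Fin n → ℕ | wt n c = m} := by
  have himg : {f : Fin n → ℕ | Monotone f ∧ ∑ t : Fin n, f t = m}
      = Sf n '' {c : Fin n → ℕ | wt n c = m} := by
    ext f
    constructor
    · rintro ⟨hmono, hsum⟩
      refine ⟨dstep n f, ?_, Sf_dstep hmono⟩
      show wt n (dstep n f) = m
      rw [← sum_Sf n (dstep n f), Sf_dstep hmono, hsum]
    · rintro ⟨c, hc, rfl⟩
      exact ⟨Sf_monotone n c, by rw [sum_Sf n c]; exact hc⟩
  rw [himg, Set.ncard_image_of_injOn fun c _ c' _ h => Sf_injective h]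


def Aset (b0 n d : ℕ) : Set (ℕ →₀ ℕ) :=
  {a : ℕ →₀ ℕ | (∀ i, a i * a (i + 1) = 0) ∧ (∀ i, a i ≤ 1) ∧ a 0 ≤ b0 ∧
      (a.sum fun _ v => v) = n ∧ (a.sum fun i v => i * v) = d}

lemma Aset_empty {b0 n d : ℕ} (hd : d < E b0 n) : Aset b0 n d = ∅ := by
  ext a
  simp only [Aset, Set.mem_setOf_eq, Set.mem_empty_iff_false, iff_false]
  rintro ⟨h1, h2, h3, h4, h5⟩
  obtain ⟨f, _, _, hw⟩ := exists_preimage a h1 h2 h3 h4 h5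
  omega

lemma Aset_eq {b0 n d : ℕ} (hb0 : b0 ≤ 1) (hd : E b0 n ≤ d) :
    Aset b0 n d = Psi b0 n '' {f : Fin n → ℕ | Monotone f ∧ ∑ t : Fin n, f t = d - E b0 n} := by
  ext a
  constructor
  · rintro ⟨h1, h2, h3, h4, h5⟩
    obtain ⟨f, hmono, hPsi, hw⟩ := exists_preimage a h1 h2 h3 h4 h5
    exact ⟨f, ⟨hmono, by omega⟩, hPsi⟩
  · rintro ⟨f, ⟨hmono, hsum⟩, rfl⟩
    refine ⟨Psi_adj hmono, Psi_le_one hmono, Psi_zero_le hb0 hmono, Psi_sum_values f, ?_⟩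
    rw [Psi_sum_weight, hsum]
    omega

lemma ncard_Aset {b0 n d : ℕ} (hb0 : b0 ≤ 1) (hd : E b0 n ≤ d) :
    Set.ncard (Aset b0 n d)
      = Set.ncard {f : Fin n → ℕ | Monotone f ∧ ∑ t : Fin n, f t = d - E b0 n} := by
  rw [Aset_eq hb0 hd, Set.ncard_image_of_injOn fun f hf g hg h => Psi_inj hf.1 hg.1 h]


end RRaux

open PowerSeries

/-- For `k = 1` and `b₀ ∈ {0, 1}`, the character of `(1,2)`-admissible
configurations (sequences of `0`s and `1`s with no two consecutive `1`s, and `a_0 ≤ b₀`)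
satisfies `Σ q^{Σ j a_j} z^{Σ a_j} = Σ_{m≥0} q^{m(m−1)+(1−b₀)m} z^m/(q)_m`; stated as a
power-series identity in `q` for each fixed `z`-degree `m = n`. -/
theorem rogers_ramanujan_type (b0 : ℕ) (hb0 : b0 ≤ 1) (n : ℕ) :
    (PowerSeries.mk fun d : ℕ =>
      (Set.ncard {a : ℕ →₀ ℕ |
          (∀ i, a i * a (i + 1) = 0) ∧ (∀ i, a i ≤ 1) ∧ a 0 ≤ b0 ∧
          (a.sum fun _ v => v) = n ∧ (a.sum fun i v => i * v) = d} : ℂ)) =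
    (PowerSeries.X : PowerSeries ℂ) ^ (n * (n - 1) + (1 - b0) * n) *
      (∏ j ∈ Finset.range n, (1 - (PowerSeries.X : PowerSeries ℂ) ^ (j + 1)))⁻¹ := by
  ext d
  rw [PowerSeries.coeff_mk, RRaux.prod_inv_eq n, PowerSeries.coeff_X_pow_mul']
  have hAset : {a : ℕ →₀ ℕ |
      (∀ i, a i * a (i + 1) = 0) ∧ (∀ i, a i ≤ 1) ∧ a 0 ≤ b0 ∧
      (a.sum fun _ v => v) = n ∧ (a.sum fun i v => i * v) = d} = RRaux.Aset b0 n d := rfl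
  have hE : n * (n - 1) + (1 - b0) * n = RRaux.E b0 n := rfl
  by_cases hd : n * (n - 1) + (1 - b0) * n ≤ d
  · rw [if_pos hd, RRaux.coeff_prod_G]
    have hnat : Set.ncard (RRaux.Aset b0 n d)
        = (RRaux.DF n (d - (n * (n - 1) + (1 - b0) * n))).card := by
      rw [RRaux.ncard_Aset hb0 (hE ▸ hd), RRaux.ncard_L_eq_M, ← RRaux.card_DF, hE]
    rw [hAset, hnat]
  · rw [if_neg hd, hAset, RRaux.Aset_empty (by rw [← hE]; omega), Set.ncard_empty]
    norm_num
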